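/- (de Caen's inequality) Let A_1,…,A_N be events in a probability space. Then P(∪_{k=1}^N A_k) ≥ Σ_{k=1}^N P(A_k)² / (Σ_{i=1}^N P(A_i ∩ A_k)), with the convention that a summand with P(A_k) = 0 is 0. -/

import Mathlib

open Finset MeasureTheory

theorem de_caen_inequality (Ω : Type*) [MeasurableSpace Ω]
    (P : Measure Ω) [IsProbabilityMeasure P]
    (N : ℕ) (A : ℕ → Set Ω) (hA : ∀ k, MeasurableSet (A k)) :
    (P (⋃ k ∈ Finset.Icc 1 N, A k)).toReal
      ≥ ∑ k ∈ Finset.Icc 1 N,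
          (P (A k)).toReal ^ 2 / ∑ i ∈ Finset.Icc 1 N, (P (A i ∩ A k)).toReal := by
  classical
  set I : Finset ℕ := Finset.Icc 1 N with hI
  -- atoms
  set C : Finset ℕ → Set Ω := fun T => {ω | ∀ i ∈ I, (ω ∈ A i ↔ i ∈ T)} with hC
  have hCmeas : ∀ T, MeasurableSet (C T) := by
    intro T
    have hEq : C T = ⋂ i ∈ (I : Set ℕ), (if i ∈ T then A i else (A i)ᶜ) := by
      ext ω
      simp only [hC, Set.mem_setOf_eq, Set.mem_iInter, Finset.mem_coe]
      constructor
      · intro h i hi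
        by_cases hiT : i ∈ T
        · simpa [hiT] using (h i hi).2 hiT
        · simpa [hiT] using fun hw => hiT ((h i hi).1 hw)
      · intro h i hi
        have := h i hi
        by_cases hiT : i ∈ T
        · simp only [hiT, if_true] at this; exact ⟨fun _ => hiT, fun _ => this⟩
        · simp only [hiT, if_false] at this
          exact ⟨fun hw => absurd hw this, fun h' => absurd h' hiT⟩
    rw [hEq]
    exact MeasurableSet.biInter I.countable_toSet (fun i _ => by
      by_cases hiT : i ∈ T <;> simp [hiT, hA i, (hA i).compl])
  have hCdisj : (↑I.powerset : Set (Finset ℕ)).PairwiseDisjoint C := by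
    intro T hT T' hT' hne
    simp only [Finset.coe_powerset, Set.mem_preimage, Set.mem_powerset_iff,
      Finset.coe_subset] at hT hT'
    simp only [Function.onFun]
    rw [Set.disjoint_left]
    intro ω hω hω'
    apply hne
    ext i
    by_cases hi : i ∈ I
    · rw [← hω i hi, ← hω' i hi]
    · constructor
      · intro h; exact absurd (hT h) hi
      · intro h; exact absurd (hT' h) hi
  have hCcover : ∀ ω : Ω, ∃ T ∈ I.powerset, ω ∈ C T := by
    intro ω
    refine ⟨I.filter (fun i => ω ∈ A i), Finset.mem_powerset.2 (Finset.filter_subset _ _), ?_⟩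
    intro i hi
    simp [Finset.mem_filter, hi]
  -- key decomposition
  have key : ∀ E : Set Ω, MeasurableSet E →
      (P E).toReal = ∑ T ∈ I.powerset, (P (E ∩ C T)).toReal := by
    intro E hE
    have hU : E = ⋃ T ∈ I.powerset, (E ∩ C T) := by
      ext ω
      simp only [Set.mem_iUnion, Set.mem_inter_iff]
      constructor
      · intro hω
        obtain ⟨T, hT, hωT⟩ := hCcover ω
        exact ⟨T, hT, hω, hωT⟩
      · rintro ⟨T, _, hω, _⟩; exact hω
    have hmeas : ∀ T ∈ I.powerset, MeasurableSet (E ∩ C T) :=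
      fun T _ => hE.inter (hCmeas T)
    have hdisj : (↑I.powerset : Set (Finset ℕ)).PairwiseDisjoint (fun T => E ∩ C T) :=
      fun T hT T' hT' hne =>
        (hCdisj hT hT' hne).mono Set.inter_subset_right Set.inter_subset_right
    conv_lhs => rw [hU]
    rw [measure_biUnion_finset hdisj hmeas,
      ENNReal.toReal_sum (fun T _ => measure_ne_top P _)]
  set x : Finset ℕ → ℝ := fun T => (P (C T)).toReal with hx
  have hx0 : ∀ T, 0 ≤ x T := fun T => ENNReal.toReal_nonneg
  -- compute P(A k)
  have hAk : ∀ k ∈ I, (P (A k)).toReal = ∑ T ∈ I.powerset, (if k ∈ T then x T else 0) := by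
    intro k hk
    rw [key (A k) (hA k)]
    refine Finset.sum_congr rfl fun T hT => ?_
    by_cases hkT : k ∈ T
    · simp only [hkT, if_true]
      congr 1
      congr 1
      apply Set.inter_eq_right.2
      intro ω hω
      exact (hω k hk).2 hkT
    · simp only [hkT, if_false]
      have : A k ∩ C T = ∅ := by
        ext ω
        simp only [Set.mem_inter_iff, Set.mem_empty_iff_false, iff_false, not_and]
        intro hωA hωC
        exact hkT ((hωC k hk).1 hωA)
      simp [this]
  -- compute P(A i ∩ A k)
  have hAik : ∀ i ∈ I, ∀ k ∈ I, (P (A i ∩ A k)).toReal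
      = ∑ T ∈ I.powerset, (if i ∈ T ∧ k ∈ T then x T else 0) := by
    intro i hi k hk
    rw [key (A i ∩ A k) ((hA i).inter (hA k))]
    refine Finset.sum_congr rfl fun T hT => ?_
    by_cases h : i ∈ T ∧ k ∈ T
    · simp only [h, if_true]
      congr 1
      congr 1
      apply Set.inter_eq_right.2
      intro ω hω
      exact ⟨(hω i hi).2 h.1, (hω k hk).2 h.2⟩
    · simp only [h, if_false]
      have : (A i ∩ A k) ∩ C T = ∅ := by
        ext ω
        simp only [Set.mem_inter_iff, Set.mem_empty_iff_false, iff_false, not_and]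
        intro hωA hωC
        exact h ⟨(hωC i hi).1 hωA.1, (hωC k hk).1 hωA.2⟩
      simp [this]
  -- compute P(union)
  have hUnion : (P (⋃ k ∈ I, A k)).toReal
      = ∑ T ∈ I.powerset, (if T.Nonempty then x T else 0) := by
    rw [key (⋃ k ∈ I, A k) (I.measurableSet_biUnion (fun k _ => hA k))]
    refine Finset.sum_congr rfl fun T hT => ?_
    rw [Finset.mem_powerset] at hT
    by_cases h : T.Nonempty
    · simp only [h, if_true]
      congr 1
      congr 1
      apply Set.inter_eq_right.2
      intro ω hω
      obtain ⟨k, hk⟩ := h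
      exact Set.mem_biUnion (hT hk) ((hω k (hT hk)).2 hk)
    · simp only [h, if_false]
      rw [Finset.not_nonempty_iff_eq_empty] at h
      have : (⋃ k ∈ I, A k) ∩ C T = ∅ := by
        ext ω
        simp only [Set.mem_inter_iff, Set.mem_empty_iff_false, iff_false, not_and]
        intro hωA hωC
        simp only [Set.mem_iUnion] at hωA
        obtain ⟨k, hk, hωk⟩ := hωA
        have := (hωC k hk).1 hωk
        simp [h] at this
      simp [this]
  -- denominator sum
  have hDenom : ∀ k ∈ I, ∑ i ∈ I, (P (A i ∩ A k)).toReal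
      = ∑ T ∈ I.powerset, (if k ∈ T then (T.card : ℝ) * x T else 0) := by
    intro k hk
    rw [Finset.sum_congr rfl (fun i hi => hAik i hi k hk), Finset.sum_comm]
    refine Finset.sum_congr rfl fun T hT => ?_
    rw [Finset.mem_powerset] at hT
    by_cases hkT : k ∈ T
    · simp only [hkT, and_true, if_true]
      rw [Finset.sum_ite_mem, Finset.inter_eq_right.2 hT]
      simp [Finset.sum_const, nsmul_eq_mul]
    · simp [hkT]
  -- per-k Cauchy-Schwarz bound
  have perk : ∀ k ∈ I,
      (P (A k)).toReal ^ 2 / (∑ i ∈ I, (P (A i ∩ A k)).toReal)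
        ≤ ∑ T ∈ I.powerset, (if k ∈ T then x T / T.card else 0) := by
    intro k hk
    rw [hAk k hk, hDenom k hk]
    set D := ∑ T ∈ I.powerset, (if k ∈ T then (T.card : ℝ) * x T else 0) with hD
    have hDnn : 0 ≤ D := Finset.sum_nonneg fun T _ => by
      by_cases hkT : k ∈ T <;> simp [hkT, mul_nonneg (Nat.cast_nonneg _) (hx0 T)]
    have hCS : (∑ T ∈ I.powerset, (if k ∈ T then x T else 0)) ^ 2
        ≤ D * ∑ T ∈ I.powerset, (if k ∈ T then x T / T.card else 0) := by
      apply Finset.sum_sq_le_sum_mul_sum_of_sq_eq_mul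
      · intro T _
        by_cases hkT : k ∈ T <;> simp [hkT, mul_nonneg (Nat.cast_nonneg _) (hx0 T)]
      · intro T _
        by_cases hkT : k ∈ T <;>
          simp [hkT, div_nonneg (hx0 T) (Nat.cast_nonneg _)]
      · intro T _
        by_cases hkT : k ∈ T
        · simp only [hkT, if_true]
          have hTpos : (0:ℝ) < T.card := by
            have : 0 < T.card := Finset.card_pos.2 ⟨k, hkT⟩
            exact_mod_cast this
          field_simp
        · simp [hkT]
    rcases eq_or_lt_of_le hDnn with hD0 | hDpos
    · rw [← hD0, div_zero]
      exact Finset.sum_nonneg fun T _ => by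
        by_cases hkT : k ∈ T <;> simp [hkT, div_nonneg (hx0 T) (Nat.cast_nonneg _)]
    · rw [div_le_iff₀ hDpos]
      calc (∑ T ∈ I.powerset, (if k ∈ T then x T else 0)) ^ 2
          ≤ D * ∑ T ∈ I.powerset, (if k ∈ T then x T / T.card else 0) := hCS
        _ = (∑ T ∈ I.powerset, (if k ∈ T then x T / T.card else 0)) * D := mul_comm _ _
  -- sum up
  rw [ge_iff_le]
  calc ∑ k ∈ I, (P (A k)).toReal ^ 2 / ∑ i ∈ I, (P (A i ∩ A k)).toReal
      ≤ ∑ k ∈ I, ∑ T ∈ I.powerset, (if k ∈ T then x T / T.card else 0) :=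
        Finset.sum_le_sum perk
    _ = ∑ T ∈ I.powerset, ∑ k ∈ I, (if k ∈ T then x T / T.card else 0) := Finset.sum_comm
    _ = ∑ T ∈ I.powerset, (if T.Nonempty then x T else 0) := by
        refine Finset.sum_congr rfl fun T hT => ?_
        rw [Finset.mem_powerset] at hT
        rw [Finset.sum_ite_mem, Finset.inter_eq_right.2 hT, Finset.sum_const, nsmul_eq_mul]
        by_cases h : T.Nonempty
        · simp only [h, if_true]
          have hTpos : (0:ℝ) < T.card := by
            exact_mod_cast Finset.card_pos.2 h
          field_simp
        · rw [Finset.not_nonempty_iff_eq_empty] at h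
          simp [h]
    _ = (P (⋃ k ∈ I, A k)).toReal := hUnion.symm
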